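/- arXiv:2301.10873 — 2 statements merged into one kernel-verified Lean document; each statement's English description precedes it below -/
import Mathlib

section
/- Suppose the data (x,u) satisfy the standing data assumptions and let δ > 0 be such that T/δ is a positive integer. Then for every L ≥ 0, Σ(Q) ∩ M^L_{x,u} ⊆ Σ^δ(Q + (1/2)δTL·I_n). Moreover, if the true noise signal w(t) = ẋ(t) − A_s x(t) − B_s u(t) is L-square Lipschitz, then (A_s, B_s) ∈ Σ(Q) ∩ M^L_{x,u}, so in particular Σ(Q) ∩ M^L_{x,u} is nonempty. -/
open MeasureTheory Matrix

noncomputable def opNorm {ι κ : Type} [Fintype ι] [Fintype κ] [DecidableEq κ]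
    (M : Matrix ι κ ℝ) : ℝ :=
  ‖LinearMap.toContinuousLinearMap (Matrix.toEuclideanLin M)‖

noncomputable def euclNorm {ι : Type} [Fintype ι] (v : ι → ℝ) : ℝ :=
  Real.sqrt (∑ i, v i ^ 2)

/-- `v` is `L`-square Lipschitz on `[0,T]`. -/
def SqLipschitz {ι : Type} [Fintype ι] [DecidableEq ι] (T L : ℝ) (v : ℝ → ι → ℝ) : Prop :=
  ∀ t₁ ∈ Set.Icc (0:ℝ) T, ∀ t₂ ∈ Set.Icc (0:ℝ) T,
    opNorm (Matrix.vecMulVec (v t₁) (v t₁) - Matrix.vecMulVec (v t₂) (v t₂)) ≤ L * |t₁ - t₂|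

/-- The set of all partition sums appearing in the definition of total square variation. -/
def partitionSums {ι : Type} [Fintype ι] [DecidableEq ι] (T : ℝ) (v : ℝ → ι → ℝ) : Set ℝ :=
  { s | ∃ (N : ℕ) (t : Fin (N + 1) → ℝ), Monotone t ∧ t 0 = 0 ∧ t (Fin.last N) = T ∧
      s = ∑ i : Fin N, opNorm (Matrix.vecMulVec (v (t i.succ)) (v (t i.succ)) -
            Matrix.vecMulVec (v (t i.castSucc)) (v (t i.castSucc))) }

/-- Total square variation `V_0^T(v)`. -/
noncomputable def totalSqVar {ι : Type} [Fintype ι] [DecidableEq ι] (T : ℝ) (v : ℝ → ι → ℝ) : ℝ :=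
  sSup (partitionSums T v)

/-- `V_0^T(v) ≤ c`, phrased via all partition sums. -/
def TotalSqVarLE {ι : Type} [Fintype ι] [DecidableEq ι] (T : ℝ) (v : ℝ → ι → ℝ) (c : ℝ) : Prop :=
  ∀ s ∈ partitionSums T v, s ≤ c

/-- Loewner order `M ≤ N`. -/
def loewnerLE {ι : Type} [Fintype ι] (M N : Matrix ι ι ℝ) : Prop := (N - M).PosSemidef

/-- Strict Loewner order `M < N`. -/
def loewnerLT {ι : Type} [Fintype ι] (M N : Matrix ι ι ℝ) : Prop := (N - M).PosDef

/-- `M` is negative definite. -/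
def negDefQ {ι : Type} [Fintype ι] (M : Matrix ι ι ℝ) : Prop := (-M).PosDef

/-- Entrywise Lebesgue integral of a matrix-valued function on `[0,T]`. -/
noncomputable def matIntegral {ι κ : Type} (T : ℝ) (f : ℝ → Matrix ι κ ℝ) : Matrix ι κ ℝ :=
  Matrix.of fun i j => ∫ t in Set.Ioc (0:ℝ) T, f t i j

/-- `δ • Σ_{k<N} v(kδ) v(kδ)ᵀ`. -/
noncomputable def sampledGram {ι : Type} [Fintype ι] (δ : ℝ) (N : ℕ) (v : ℝ → ι → ℝ) :
    Matrix ι ι ℝ :=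
  δ • ∑ k ∈ Finset.range N, Matrix.vecMulVec (v (k * δ)) (v (k * δ))

/-- The noise signal `ẋ − Ax − Bu` associated with a candidate system `(A,B)`. -/
def noiseSig {n m : ℕ} (xdot x : ℝ → Fin n → ℝ) (u : ℝ → Fin m → ℝ)
    (A : Matrix (Fin n) (Fin n) ℝ) (B : Matrix (Fin n) (Fin m) ℝ) : ℝ → Fin n → ℝ :=
  fun t => xdot t - A.mulVec (x t) - B.mulVec (u t)

/-- `Σ(Q')`: systems consistent with the continuous-time data. -/
def SigmaCont {n m : ℕ} (T : ℝ) (xdot x : ℝ → Fin n → ℝ) (u : ℝ → Fin m → ℝ)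
    (Q' : Matrix (Fin n) (Fin n) ℝ) :
    Set (Matrix (Fin n) (Fin n) ℝ × Matrix (Fin n) (Fin m) ℝ) :=
  { AB | loewnerLE (matIntegral T fun t =>
      Matrix.vecMulVec (noiseSig xdot x u AB.1 AB.2 t) (noiseSig xdot x u AB.1 AB.2 t)) Q' }

/-- `Σ^δ(Q')`: systems consistent with the data sampled at stepsize `δ` (with `N = T/δ` samples). -/
def SigmaDisc {n m : ℕ} (δ : ℝ) (N : ℕ) (xdot x : ℝ → Fin n → ℝ) (u : ℝ → Fin m → ℝ)
    (Q' : Matrix (Fin n) (Fin n) ℝ) :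
    Set (Matrix (Fin n) (Fin n) ℝ × Matrix (Fin n) (Fin m) ℝ) :=
  { AB | loewnerLE (sampledGram δ N (noiseSig xdot x u AB.1 AB.2)) Q' }

/-- `M^L_{x,u}`: systems whose associated noise is `L`-square Lipschitz. -/
def Mset {n m : ℕ} (T L : ℝ) (xdot x : ℝ → Fin n → ℝ) (u : ℝ → Fin m → ℝ) :
    Set (Matrix (Fin n) (Fin n) ℝ × Matrix (Fin n) (Fin m) ℝ) :=
  { AB | SqLipschitz T L (noiseSig xdot x u AB.1 AB.2) }

/-- `N^L_{x,u}`: systems whose associated noise has total square variation at most `LT/2`. -/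
def Nset {n m : ℕ} (T L : ℝ) (xdot x : ℝ → Fin n → ℝ) (u : ℝ → Fin m → ℝ) :
    Set (Matrix (Fin n) (Fin n) ℝ × Matrix (Fin n) (Fin m) ℝ) :=
  { AB | TotalSqVarLE T (noiseSig xdot x u AB.1 AB.2) (L * T / 2) }

/-- The stacked signal `ξ(t) = (ẋ(t); −x(t); −u(t))`. -/
def xiSig {n m : ℕ} (xdot x : ℝ → Fin n → ℝ) (u : ℝ → Fin m → ℝ) (t : ℝ) :
    (Fin n ⊕ (Fin n ⊕ Fin m)) → ℝ :=
  Sum.elim (xdot t) (Sum.elim (fun i => -(x t i)) (fun j => -(u t j)))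

/-- The block matrix `[[Q + βI, P, PKᵀ], [P, 0, 0], [KP, 0, 0]]`. -/
noncomputable def lmiBlock {n m : ℕ} (Q P : Matrix (Fin n) (Fin n) ℝ)
    (K : Matrix (Fin m) (Fin n) ℝ) (β : ℝ) :
    Matrix (Fin n ⊕ (Fin n ⊕ Fin m)) (Fin n ⊕ (Fin n ⊕ Fin m)) ℝ :=
  Matrix.fromBlocks (Q + β • (1 : Matrix (Fin n) (Fin n) ℝ))
    (Matrix.of fun i jj => Sum.elim (fun j => P i j) (fun j => (P * K.transpose) i j) jj)
    (Matrix.of fun ii j => Sum.elim (fun i => P i j) (fun k => (K * P) k j) ii)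
    0

/-- The continuous-data LMI. -/
def ContLMI {n m : ℕ} (T : ℝ) (xdot x : ℝ → Fin n → ℝ) (u : ℝ → Fin m → ℝ)
    (Q P : Matrix (Fin n) (Fin n) ℝ) (K : Matrix (Fin m) (Fin n) ℝ) (β : ℝ) : Prop :=
  (matIntegral T (fun t => Matrix.vecMulVec (xiSig xdot x u t) (xiSig xdot x u t)) -
    lmiBlock Q P K β).PosSemidef

/-- The sampled-data LMI at stepsize `δ` (with `N = T/δ` samples). -/
def SampLMI {n m : ℕ} (δ : ℝ) (N : ℕ) (xdot x : ℝ → Fin n → ℝ) (u : ℝ → Fin m → ℝ)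
    (Q P : Matrix (Fin n) (Fin n) ℝ) (K : Matrix (Fin m) (Fin n) ℝ) (β : ℝ) : Prop :=
  (sampledGram δ N (xiSig xdot x u) - lmiBlock Q P K β).PosSemidef


section AuxStmt9

lemma quad_le_opNorm' {p : ℕ} (M : Matrix (Fin p) (Fin p) ℝ) (y : Fin p → ℝ) :
    y ⬝ᵥ M.mulVec y ≤ opNorm M * ∑ i, y i ^ 2 := by
  set T := LinearMap.toContinuousLinearMap (Matrix.toEuclideanLin M) with hTdef
  set Y : EuclideanSpace ℝ (Fin p) := (WithLp.equiv 2 (Fin p → ℝ)).symm y with hY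
  have h1 : y ⬝ᵥ M.mulVec y = inner ℝ Y (T Y) := by
    simp [hY, PiLp.inner_apply, dotProduct, RCLike.inner_apply, hTdef]; exact Finset.sum_congr rfl fun i _ => mul_comm _ _
  have h2 : ‖Y‖ ^ 2 = ∑ i, y i ^ 2 := by
    rw [EuclideanSpace.norm_eq, Real.sq_sqrt (by positivity)]
    simp [hY, Real.norm_eq_abs, sq_abs]
  calc y ⬝ᵥ M.mulVec y = inner ℝ Y (T Y) := h1
    _ ≤ ‖Y‖ * ‖T Y‖ := real_inner_le_norm _ _
    _ ≤ ‖Y‖ * (‖T‖ * ‖Y‖) :=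
        mul_le_mul_of_nonneg_left (T.le_opNorm Y) (norm_nonneg Y)
    _ = opNorm M * ∑ i, y i ^ 2 := by rw [opNorm, ← hTdef, ← h2]; ring

lemma quad_vecMulVec {p : ℕ} (v y : Fin p → ℝ) :
    y ⬝ᵥ (Matrix.vecMulVec v v).mulVec y = (v ⬝ᵥ y) ^ 2 := by
  have h : (Matrix.vecMulVec v v).mulVec y = fun i => v i * (v ⬝ᵥ y) := by
    funext i
    simp [Matrix.mulVec, Matrix.vecMulVec, dotProduct, Finset.mul_sum, mul_assoc]
  rw [h]
  have h2 : y ⬝ᵥ (fun i => v i * (v ⬝ᵥ y)) = (∑ x, v x * y x) * (v ⬝ᵥ y) := by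
    rw [dotProduct, Finset.sum_mul]
    exact Finset.sum_congr rfl fun i _ => by ring
  rw [h2]
  have h3 : (∑ x, v x * y x) = v ⬝ᵥ y := rfl
  rw [h3, sq]

lemma dot_sum_mulVec {p : ℕ} {ι : Type*} (s : Finset ι) (M : ι → Matrix (Fin p) (Fin p) ℝ)
    (y : Fin p → ℝ) :
    y ⬝ᵥ (∑ k ∈ s, M k).mulVec y = ∑ k ∈ s, y ⬝ᵥ (M k).mulVec y := by
  classical
  induction s using Finset.induction with
  | empty => simp
  | insert _ _ h ih =>
      rw [Finset.sum_insert h, Matrix.add_mulVec, dotProduct_add, ih, Finset.sum_insert h]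

lemma smul_one_isHermitian {p : ℕ} (c : ℝ) :
    (c • (1 : Matrix (Fin p) (Fin p) ℝ)).IsHermitian := by
  simp [Matrix.IsHermitian, Matrix.conjTranspose_smul]

end AuxStmt9

theorem stmt9
    {n m : ℕ} (T : ℝ) (hT : 0 < T)
    (x xdot : ℝ → Fin n → ℝ) (u : ℝ → Fin m → ℝ)
    (Q : Matrix (Fin n) (Fin n) ℝ) (hQ : Q.PosSemidef)
    (hxdotL2 : MeasureTheory.MemLp xdot 2 (MeasureTheory.volume.restrict (Set.Icc (0:ℝ) T)))
    (huL2 : MeasureTheory.MemLp u 2 (MeasureTheory.volume.restrict (Set.Icc (0:ℝ) T)))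
    (hAC : ∀ t ∈ Set.Icc (0:ℝ) T, ∀ i, x t i = x 0 i + ∫ s in (0:ℝ)..t, xdot s i)
    (As : Matrix (Fin n) (Fin n) ℝ) (Bs : Matrix (Fin n) (Fin m) ℝ)
    (htrue : (As, Bs) ∈ SigmaCont T xdot x u Q)
    (δ : ℝ) (hδ : 0 < δ) (N : ℕ) (hN : 0 < N) (hTN : T = N * δ)
    :
    ∀ L : ℝ, 0 ≤ L →
      (SigmaCont T xdot x u Q ∩ Mset T L xdot x u ⊆
        SigmaDisc δ N xdot x u (Q + (δ * T * L / 2) • (1 : Matrix (Fin n) (Fin n) ℝ))) ∧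
      (SqLipschitz T L (noiseSig xdot x u As Bs) →
        (As, Bs) ∈ SigmaCont T xdot x u Q ∩ Mset T L xdot x u) := by
  intro L hL
  refine ⟨?_, fun hL2 => ⟨htrue, hL2⟩⟩
  rintro ⟨A, B⟩ ⟨hSig, hLip⟩
  simp only [SigmaCont, Set.mem_setOf_eq] at hSig
  simp only [Mset, Set.mem_setOf_eq] at hLip
  set w : ℝ → Fin n → ℝ := noiseSig xdot x u A B with hw
  set μI := MeasureTheory.volume.restrict (Set.Icc (0:ℝ) T) with hμI
  haveI : IsFiniteMeasure μI := ⟨by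
    rw [hμI, Measure.restrict_apply_univ]; exact measure_Icc_lt_top⟩
  -- x is in L²
  have hxL2 : MemLp x 2 μI := by
    have hxdotInt : ∀ i, IntegrableOn (fun s => xdot s i) (Set.Icc (0:ℝ) T) volume := by
      intro i
      have h1 : MemLp (fun t => xdot t i) 2 μI :=
        (ContinuousLinearMap.proj (R := ℝ) (φ := fun _ : Fin n => ℝ) i).comp_memLp' hxdotL2
      exact memLp_one_iff_integrable.mp (h1.mono_exponent (by norm_num))
    set g : ℝ → Fin n → ℝ := fun t i => x 0 i + ∫ s in (0:ℝ)..t, xdot s i with hg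
    have hgcont : ContinuousOn g (Set.Icc (0:ℝ) T) := by
      rw [continuousOn_pi]
      intro i
      apply ContinuousOn.add continuousOn_const
      have h2 := intervalIntegral.continuousOn_primitive_interval
        (a := 0) (b := T) (μ := volume) (f := fun s => xdot s i)
        (by rw [Set.uIcc_of_le hT.le]; exact hxdotInt i)
      rwa [Set.uIcc_of_le hT.le] at h2
    obtain ⟨C, hC⟩ := isCompact_Icc.exists_bound_of_continuousOn hgcont
    have hgL2 : MemLp g 2 μI :=
      MemLp.of_bound (hgcont.aestronglyMeasurable measurableSet_Icc) C
        ((ae_restrict_iff' measurableSet_Icc).2 (ae_of_all _ hC))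
    exact hgL2.ae_eq ((ae_restrict_iff' measurableSet_Icc).2
      (ae_of_all _ fun t ht => (funext fun i => hAC t ht i).symm))
  -- w is in L²
  have hwL2 : MemLp w 2 μI := by
    have hAx : MemLp (fun t => A.mulVec (x t)) 2 μI := by
      have h := (LinearMap.toContinuousLinearMap A.mulVecLin).comp_memLp' hxL2
      exact h
    have hBu : MemLp (fun t => B.mulVec (u t)) 2 μI := by
      have h := (LinearMap.toContinuousLinearMap B.mulVecLin).comp_memLp' huL2
      exact h
    exact (hxdotL2.sub hAx).sub hBu
  have hwi : ∀ i, MemLp (fun t => w t i) 2 μI := fun i =>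
    (ContinuousLinearMap.proj (R := ℝ) (φ := fun _ : Fin n => ℝ) i).comp_memLp' hwL2
  have hent : ∀ i j, IntegrableOn (fun t => w t i * w t j) (Set.Icc (0:ℝ) T) volume := by
    intro i j
    have h112 : (1 : ENNReal) / 1 = 1 / 2 + 1 / 2 := by
      rw [ENNReal.add_halves, one_div_one]
    have h := MemLp.smul (r := 1) (hwi j) (hwi i) (hpqr := ⟨by rw [ENNReal.inv_two_add_inv_two, inv_one]⟩)
    have h2 : MemLp (fun t => w t i * w t j) 1 μI := by
      have : ((fun t => w t i) • (fun t => w t j)) = fun t => w t i * w t j := by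
        funext t; simp [smul_eq_mul]
      rwa [this] at h
    exact memLp_one_iff_integrable.mp h2
  have hwc : ∀ c : Fin n → ℝ, MemLp (fun t => w t ⬝ᵥ c) 2 μI := by
    intro c
    have h := memLp_finset_sum (μ := μI) (p := 2) Finset.univ
      (f := fun i t => c i * w t i) (fun i _ => (hwi i).const_mul (c i))
    exact h.ae_eq (ae_of_all _ fun t => by
      simp only [dotProduct]
      exact Finset.sum_congr rfl fun i _ => mul_comm _ _)
  -- Hermitian facts
  set IT := matIntegral T (fun t => Matrix.vecMulVec (w t) (w t)) with hIT0
  set G := sampledGram δ N w with hG0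
  have hermIT : IT.IsHermitian := by
    apply Matrix.ext
    intro i j
    simp only [hIT0, matIntegral, Matrix.conjTranspose_apply, Matrix.of_apply,
      Matrix.vecMulVec_apply, star_trivial]
    exact integral_congr_ae (ae_of_all _ fun t => mul_comm _ _)
  have hermG : G.IsHermitian := by
    apply Matrix.ext
    intro i j
    simp only [hG0, sampledGram, Matrix.conjTranspose_apply, Matrix.smul_apply,
      Matrix.sum_apply, Matrix.vecMulVec_apply, star_trivial, smul_eq_mul]
    exact congrArg (δ * ·) (Finset.sum_congr rfl fun k _ => mul_comm _ _)
  have hsub : ∀ k : ℕ, k < N → Set.Ioc ((k:ℝ)*δ) (((k:ℝ)+1)*δ) ⊆ Set.Icc (0:ℝ) T := by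
    intro k hk t ht
    have hk1 : ((k:ℝ)+1) ≤ (N:ℝ) := by exact_mod_cast hk
    constructor
    · have h0 : (0:ℝ) ≤ (k:ℝ)*δ := by positivity
      linarith [ht.1]
    · have hb : ((k:ℝ)+1)*δ ≤ (N:ℝ)*δ := by nlinarith [hδ.le]
      rw [hTN]; linarith [ht.2]
  -- the key PSD matrix
  have h2 : (IT + (δ * T * L / 2) • (1 : Matrix (Fin n) (Fin n) ℝ) - G).PosSemidef := by
    refine Matrix.posSemidef_iff_dotProduct_mulVec.2 ⟨(hermIT.add (smul_one_isHermitian _)).sub hermG, ?_⟩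
    intro y
    have hstar : star y = y := funext fun i => rfl
    rw [hstar]
    set S : ℝ := ∑ i, y i ^ 2 with hS
    have hS0 : 0 ≤ S := by positivity
    set F : ℝ → ℝ := fun t => (w t ⬝ᵥ y) ^ 2 with hF
    have hFint : IntegrableOn F (Set.Icc (0:ℝ) T) volume := (hwc y).integrable_sq
    -- per-interval estimate
    have hkey : ∀ k : ℕ, k < N →
        δ * (w ((k:ℝ)*δ) ⬝ᵥ y) ^ 2 ≤
          (∫ t in Set.Ioc ((k:ℝ)*δ) (((k:ℝ)+1)*δ), F t) + L*δ^2/2*S := by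
      intro k hk
      set a : ℝ := (k:ℝ)*δ with ha
      set b : ℝ := ((k:ℝ)+1)*δ with hb
      have hab : a ≤ b := by rw [ha, hb]; nlinarith [hδ.le]
      have hba : b - a = δ := by rw [ha, hb]; ring
      have haIcc : a ∈ Set.Icc (0:ℝ) T := by
        constructor
        · rw [ha]; positivity
        · have hk1 : (k:ℝ) ≤ (N:ℝ) := by exact_mod_cast hk.le
          rw [ha, hTN]; nlinarith [hδ.le]
      have hFk : IntegrableOn F (Set.Ioc a b) volume := hFint.mono_set (hsub k hk)
      have hlinInt : IntegrableOn (fun t => L*(t-a)*S) (Set.Ioc a b) volume :=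
        Continuous.integrableOn_Ioc
          ((continuous_const.mul (continuous_id.sub continuous_const)).mul continuous_const)
      have hpt : ∀ t ∈ Set.Ioc a b, (w a ⬝ᵥ y)^2 ≤ F t + L*(t-a)*S := by
        intro t ht
        have htIcc : t ∈ Set.Icc (0:ℝ) T := hsub k hk ht
        have hquad : (w a ⬝ᵥ y)^2 - F t
            = y ⬝ᵥ ((Matrix.vecMulVec (w a) (w a) - Matrix.vecMulVec (w t) (w t)).mulVec y) := by
          simp only [hF]
          rw [Matrix.sub_mulVec, dotProduct_sub, quad_vecMulVec, quad_vecMulVec]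
        have hop := quad_le_opNorm' (Matrix.vecMulVec (w a) (w a) - Matrix.vecMulVec (w t) (w t)) y
        have hlipb := hLip a haIcc t htIcc
        have habs : |a - t| = t - a := by
          rw [abs_sub_comm]
          exact abs_of_nonneg (by linarith [ht.1.le])
        have hmul : opNorm (Matrix.vecMulVec (w a) (w a) - Matrix.vecMulVec (w t) (w t)) * S
            ≤ (L * (t-a)) * S := by
          apply mul_le_mul_of_nonneg_right _ hS0
          rw [← habs]
          exact hlipb
        rw [← hS] at hop
        linarith [hquad, hop, hmul]
      have hconst : ∫ t in Set.Ioc a b, (w a ⬝ᵥ y)^2 = δ * (w a ⬝ᵥ y)^2 := by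
        rw [setIntegral_const, Real.volume_real_Ioc_of_le hab, hba, smul_eq_mul]
      have hmono : ∫ t in Set.Ioc a b, (w a ⬝ᵥ y)^2 ≤
          ∫ t in Set.Ioc a b, (F t + L*(t-a)*S) :=
        setIntegral_mono_on (integrableOn_const measure_Ioc_lt_top.ne)
          (hFk.add hlinInt) measurableSet_Ioc hpt
      have hlineval : (∫ t in Set.Ioc a b, (L*(t-a)*S)) = L*δ^2/2*S := by
        rw [← intervalIntegral.integral_of_le hab]
        rw [intervalIntegral.integral_congr
          (g := fun t => (L*S) * (t - a)) (fun t _ => by ring)]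
        rw [intervalIntegral.integral_const_mul]
        rw [intervalIntegral.integral_comp_sub_right (fun z => z) a]
        rw [integral_id, hba]
        ring
      have hsplit : (∫ t in Set.Ioc a b, (F t + L*(t-a)*S))
          = (∫ t in Set.Ioc a b, F t) + L*δ^2/2*S := by
        rw [integral_add hFk hlinInt, hlineval]
      calc δ * (w a ⬝ᵥ y)^2 = ∫ t in Set.Ioc a b, (w a ⬝ᵥ y)^2 := hconst.symm
        _ ≤ ∫ t in Set.Ioc a b, (F t + L*(t-a)*S) := hmono
        _ = (∫ t in Set.Ioc a b, F t) + L*δ^2/2*S := hsplit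
    -- sum of interval integrals
    have hsumF : (∑ k ∈ Finset.range N, ∫ t in Set.Ioc ((k:ℝ)*δ) (((k:ℝ)+1)*δ), F t)
        = ∫ t in Set.Ioc (0:ℝ) T, F t := by
      have hint : ∀ k, k < N → IntervalIntegrable F volume ((k:ℝ)*δ) (((k+1:ℕ):ℝ)*δ) := by
        intro k hk
        have hcast : ((k+1:ℕ):ℝ)*δ = ((k:ℝ)+1)*δ := by push_cast; ring
        rw [hcast]
        have hab : (k:ℝ)*δ ≤ ((k:ℝ)+1)*δ := by nlinarith [hδ.le]
        exact (intervalIntegrable_iff_integrableOn_Ioc_of_le hab).2 (hFint.mono_set (hsub k hk))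
      calc (∑ k ∈ Finset.range N, ∫ t in Set.Ioc ((k:ℝ)*δ) (((k:ℝ)+1)*δ), F t)
          = ∑ k ∈ Finset.range N, ∫ t in ((k:ℝ)*δ)..(((k+1:ℕ):ℝ)*δ), F t := by
            refine Finset.sum_congr rfl fun k hk => ?_
            rw [show ((k+1:ℕ):ℝ)*δ = ((k:ℝ)+1)*δ by push_cast; ring]
            rw [intervalIntegral.integral_of_le (by nlinarith [hδ.le])]
        _ = ∫ t in (((0:ℕ):ℝ)*δ)..(((N:ℕ):ℝ)*δ), F t :=
            intervalIntegral.sum_integral_adjacent_intervals hint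
        _ = ∫ t in Set.Ioc (0:ℝ) T, F t := by
            rw [show ((0:ℕ):ℝ)*δ = (0:ℝ) by norm_num, show ((N:ℕ):ℝ)*δ = T from hTN.symm]
            exact intervalIntegral.integral_of_le hT.le
    -- quadratic form of the matrix integral
    have hentIoc : ∀ i j : Fin n,
        IntegrableOn (fun t => w t i * w t j) (Set.Ioc (0:ℝ) T) volume :=
      fun i j => (hent i j).mono_set Set.Ioc_subset_Icc_self
    have hITq : y ⬝ᵥ IT.mulVec y = ∫ t in Set.Ioc (0:ℝ) T, F t := by
      have hstep1 : ∀ i, (∑ j, (∫ t in Set.Ioc (0:ℝ) T, w t i * w t j) * y j)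
          = ∫ t in Set.Ioc (0:ℝ) T, ∑ j, (w t i * w t j) * y j := by
        intro i
        rw [integral_finset_sum _ (fun j _ => (hentIoc i j).mul_const (y j))]
        exact Finset.sum_congr rfl fun j _ => (integral_mul_const (y j) _).symm
      have hsumj : ∀ i, Integrable (fun t => ∑ j, (w t i * w t j) * y j)
          (volume.restrict (Set.Ioc (0:ℝ) T)) :=
        fun i => integrable_finset_sum _ (fun j _ => (hentIoc i j).mul_const (y j))
      calc y ⬝ᵥ IT.mulVec y
          = ∑ i, y i * ∑ j, (∫ t in Set.Ioc (0:ℝ) T, w t i * w t j) * y j := by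
            simp only [hIT0, matIntegral, Matrix.mulVec, dotProduct, Matrix.of_apply,
              Matrix.vecMulVec_apply]
        _ = ∑ i, ∫ t in Set.Ioc (0:ℝ) T, y i * ∑ j, (w t i * w t j) * y j := by
            refine Finset.sum_congr rfl fun i _ => ?_
            rw [hstep1 i, ← integral_const_mul]
        _ = ∫ t in Set.Ioc (0:ℝ) T, ∑ i, y i * ∑ j, (w t i * w t j) * y j :=
            (integral_finset_sum _ (fun i _ => (hsumj i).const_mul (y i))).symm
        _ = ∫ t in Set.Ioc (0:ℝ) T, F t := by
            refine integral_congr_ae (ae_of_all _ fun t => ?_)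
            have hFt : F t = ∑ i, ∑ j, (w t i * y i) * (w t j * y j) := by
              simp only [hF]
              rw [sq, dotProduct, Finset.sum_mul_sum]
            rw [hFt]
            refine Finset.sum_congr rfl fun i _ => ?_
            rw [Finset.mul_sum]
            exact Finset.sum_congr rfl fun j _ => by ring

    -- quadratic form of the sampled Gram matrix
    have hGq : y ⬝ᵥ G.mulVec y = ∑ k ∈ Finset.range N, δ * (w ((k:ℝ)*δ) ⬝ᵥ y)^2 := by
      rw [hG0, sampledGram, Matrix.smul_mulVec, dotProduct_smul, smul_eq_mul,
        dot_sum_mulVec, Finset.mul_sum]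
      exact Finset.sum_congr rfl fun k _ => by rw [quad_vecMulVec]
    -- combine
    have hle : (∑ k ∈ Finset.range N, δ * (w ((k:ℝ)*δ) ⬝ᵥ y)^2)
        ≤ (∫ t in Set.Ioc (0:ℝ) T, F t) + (δ * T * L / 2) * S := by
      calc (∑ k ∈ Finset.range N, δ * (w ((k:ℝ)*δ) ⬝ᵥ y)^2)
          ≤ ∑ k ∈ Finset.range N,
              ((∫ t in Set.Ioc ((k:ℝ)*δ) (((k:ℝ)+1)*δ), F t) + L*δ^2/2*S) :=
            Finset.sum_le_sum fun k hk => hkey k (Finset.mem_range.1 hk)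
        _ = (∑ k ∈ Finset.range N, ∫ t in Set.Ioc ((k:ℝ)*δ) (((k:ℝ)+1)*δ), F t)
              + (N:ℝ) * (L*δ^2/2*S) := by
            rw [Finset.sum_add_distrib, Finset.sum_const, Finset.card_range, nsmul_eq_mul]
        _ = (∫ t in Set.Ioc (0:ℝ) T, F t) + (δ * T * L / 2) * S := by
            rw [hsumF, hTN]; ring
    have hyy : y ⬝ᵥ y = S := by
      rw [hS, dotProduct]
      exact Finset.sum_congr rfl fun i _ => (sq (y i)).symm
    rw [Matrix.sub_mulVec, Matrix.add_mulVec, dotProduct_sub, dotProduct_add,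
      Matrix.smul_mulVec, Matrix.one_mulVec, dotProduct_smul, smul_eq_mul,
      hITq, hGq, hyy]
    linarith [hle]
  -- conclude
  show loewnerLE G (Q + (δ * T * L / 2) • (1 : Matrix (Fin n) (Fin n) ℝ))
  unfold loewnerLE
  have hQIT : (Q - IT).PosSemidef := hSig
  have hfinal : Q + (δ * T * L / 2) • (1 : Matrix (Fin n) (Fin n) ℝ) - G
      = (Q - IT) + (IT + (δ * T * L / 2) • (1 : Matrix (Fin n) (Fin n) ℝ) - G) := by
    abel
  rw [hfinal]
  exact Matrix.PosSemidef.add hQIT h2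
end

section
/- Suppose the data (x,u) satisfy the standing data assumptions and let δ > 0 be such that T/δ is a positive integer. Then for every L ≥ 0: (a) Σ^δ(Q) ∩ N^L_{x,u} ⊆ Σ(Q + (1/2)δTL·I_n), and (b) Σ(Q) ∩ N^L_{x,u} ⊆ Σ^δ(Q + (1/2)δTL·I_n). Moreover, if the true noise signal w(t) = ẋ(t) − A_s x(t) − B_s u(t) satisfies V_0^T(w) ≤ (1/2)LT, then (A_s, B_s) ∈ Σ(Q) ∩ N^L_{x,u}, so in particular Σ(Q) ∩ N^L_{x,u} is nonempty. -/
open MeasureTheory Matrix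

open scoped RealInnerProductSpace

section Helpers
variable {ι : Type} [Fintype ι] [DecidableEq ι]

lemma quad_le (X : Matrix ι ι ℝ) (y : ι → ℝ) :
    |y ⬝ᵥ X.mulVec y| ≤ opNorm X * ∑ i, y i ^ 2 := by
  classical
  set y' : EuclideanSpace ℝ ι := (WithLp.equiv 2 (ι → ℝ)).symm y with hy'
  set L := LinearMap.toContinuousLinearMap (Matrix.toEuclideanLin X) with hL
  have h1 : y ⬝ᵥ X.mulVec y = ⟪L y', y'⟫ := by
    rw [hL]
    simp only [LinearMap.coe_toContinuousLinearMap', Matrix.toEuclideanLin_apply]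
    rw [real_inner_comm, PiLp.inner_apply]
    simp only [RCLike.inner_apply, starRingEnd_apply, star_trivial]
    rw [dotProduct]
    exact Finset.sum_congr rfl fun i _ => mul_comm _ _
  have h2 : |⟪L y', y'⟫| ≤ ‖L‖ * ‖y'‖ ^ 2 := by
    calc |⟪L y', y'⟫| ≤ ‖L y'‖ * ‖y'‖ := abs_real_inner_le_norm _ _
    _ ≤ (‖L‖ * ‖y'‖) * ‖y'‖ := by gcongr; exact L.le_opNorm y'
    _ = ‖L‖ * ‖y'‖ ^ 2 := by ring
  have h3 : ‖y'‖ ^ 2 = ∑ i, y i ^ 2 := by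
    rw [EuclideanSpace.norm_eq, Real.sq_sqrt (by positivity)]
    refine Finset.sum_congr rfl fun i _ => ?_
    rw [Real.norm_eq_abs, sq_abs]
    rfl
  rw [h1]
  calc |⟪L y', y'⟫| ≤ ‖L‖ * ‖y'‖^2 := h2
  _ = opNorm X * ∑ i, y i ^ 2 := by rw [h3, hL]; rfl


lemma abs_entry_le (X : Matrix ι ι ℝ) (i j : ι) : |X i j| ≤ opNorm X := by
  classical
  set e : EuclideanSpace ℝ ι := EuclideanSpace.single j (1:ℝ) with he
  set L := LinearMap.toContinuousLinearMap (Matrix.toEuclideanLin X) with hL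
  have h0 : (L e : ι → ℝ) i = X i j := by
    show (X.mulVec (Pi.single j 1)) i = X i j
    rw [Matrix.mulVec_single]
    simp
  have h1 : |X i j| ≤ ‖L e‖ := by
    rw [← h0, EuclideanSpace.norm_eq]
    have h : |(L e : ι → ℝ) i| = Real.sqrt (‖(L e : ι → ℝ) i‖^2) := by
      rw [Real.sqrt_sq_eq_abs, Real.norm_eq_abs, abs_abs]
    rw [h]
    apply Real.sqrt_le_sqrt
    exact Finset.single_le_sum (f := fun k => ‖(L e : ι → ℝ) k‖^2) (fun k _ => by positivity) (Finset.mem_univ i)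
  have h2 : ‖e‖ ≤ 1 := by rw [he, EuclideanSpace.norm_single, norm_one]
  calc |X i j| ≤ ‖L e‖ := h1
  _ ≤ ‖L‖ * ‖e‖ := L.le_opNorm e
  _ ≤ ‖L‖ * 1 := by gcongr
  _ = opNorm X := by rw [mul_one, hL]; rfl

lemma opNorm_nonneg' (X : Matrix ι ι ℝ) : 0 ≤ opNorm X := norm_nonneg _

lemma opNorm_le_add (X Y : Matrix ι ι ℝ) : opNorm X ≤ opNorm (X - Y) + opNorm Y := by
  have h : X = (X - Y) + Y := by abel
  calc opNorm X = opNorm ((X - Y) + Y) := by rw [← h]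
  _ ≤ _ := by unfold opNorm; rw [map_add, map_add]; exact norm_add_le _ _

lemma opNorm_sub_le₂ (X Y : Matrix ι ι ℝ) : opNorm (X - Y) ≤ opNorm X + opNorm Y := by
  unfold opNorm
  rw [map_sub, map_sub]
  exact norm_sub_le _ _

lemma sum_range_two_mul (N : ℕ) (f : ℕ → ℝ) :
    ∑ i ∈ Finset.range (2 * N), f i = ∑ k ∈ Finset.range N, (f (2 * k) + f (2 * k + 1)) := by
  induction N with
  | zero => simp
  | succ N ih =>
      have h2 : 2 * (N + 1) = (2 * N + 1) + 1 := by ring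
      rw [h2, Finset.sum_range_succ, Finset.sum_range_succ, ih, Finset.sum_range_succ, add_assoc]

/-- Boundedness of the square signal from the total square variation. -/
lemma sq_bound {T c : ℝ} {W : ℝ → ι → ℝ} (hv : TotalSqVarLE T W c)
    {t : ℝ} (ht : t ∈ Set.Icc 0 T) :
    opNorm (vecMulVec (W t) (W t)) ≤ opNorm (vecMulVec (W 0) (W 0)) + c := by
  set p : Fin 3 → ℝ := ![0, t, T] with hp
  have hmono : Monotone p := by
    rw [Fin.monotone_iff_le_succ]
    intro i
    fin_cases i <;> simp [hp] <;> [exact ht.1; exact ht.2]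
  have hmem : (∑ i : Fin 2, opNorm (Matrix.vecMulVec (W (p i.succ)) (W (p i.succ)) -
      Matrix.vecMulVec (W (p i.castSucc)) (W (p i.castSucc)))) ∈ partitionSums T W := by
    exact ⟨2, p, hmono, rfl, rfl, rfl⟩
  have hb := hv _ hmem
  rw [Fin.sum_univ_two] at hb
  have e1 : p (0:Fin 2).succ = t := rfl
  have e2 : p (0:Fin 2).castSucc = 0 := rfl
  have e3 : p (1:Fin 2).succ = T := rfl
  have e4 : p (1:Fin 2).castSucc = t := rfl
  rw [e1, e2, e3, e4] at hb
  have := opNorm_le_add (vecMulVec (W t) (W t)) (vecMulVec (W 0) (W 0))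
  have h0 : (0:ℝ) ≤ opNorm (vecMulVec (W T) (W T) - vecMulVec (W t) (W t)) := opNorm_nonneg' _
  linarith

/-- Interleaving partitions bound for chosen sample points. -/
lemma interleave_bound {T c δ : ℝ} {W : ℝ → ι → ℝ} (hv : TotalSqVarLE T W c)
    (hδ : 0 < δ) {N : ℕ} (hTN : T = N * δ) (τ : ℕ → ℝ)
    (hτ : ∀ k < N, τ k ∈ Set.Icc ((k:ℝ) * δ) (((k:ℝ) + 1) * δ)) :
    ∑ k ∈ Finset.range N, opNorm (vecMulVec (W (τ k)) (W (τ k)) -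
      vecMulVec (W ((k:ℝ) * δ)) (W ((k:ℝ) * δ))) ≤ c := by
  classical
  set q : ℕ → ℝ := fun j => if j % 2 = 0 then ((j / 2 : ℕ) : ℝ) * δ else τ (j / 2) with hq
  set p : Fin (2 * N + 1) → ℝ := fun i => q (i : ℕ) with hp
  have hq_even : ∀ k, q (2 * k) = (k:ℝ) * δ := by
    intro k; simp only [hq]
    rw [if_pos (by omega)]
    congr 1; congr 1; omega
  have hq_odd : ∀ k, q (2 * k + 1) = τ k := by
    intro k; simp only [hq]
    rw [if_neg (by omega)]
    congr 1; omega
  have hmono : Monotone p := by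
    rw [Fin.monotone_iff_le_succ]
    intro i
    show q (i.castSucc : ℕ) ≤ q (i.succ : ℕ)
    rw [Fin.coe_castSucc, Fin.val_succ]
    rcases Nat.even_or_odd (i : ℕ) with ⟨k, hk⟩ | ⟨k, hk⟩
    · have hkN : k < N := by omega
      have h1 : (i:ℕ) = 2 * k := by omega
      rw [h1, hq_even, hq_odd]
      exact (hτ k hkN).1
    · have hkN : k < N := by have := i.isLt; omega
      have h1 : (i:ℕ) = 2 * k + 1 := by omega
      rw [h1, show 2 * k + 1 + 1 = 2 * (k + 1) by ring, hq_odd, hq_even]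
      have h3 := (hτ k hkN).2
      push_cast
      linarith
  have hmem : (∑ i : Fin (2 * N), opNorm (Matrix.vecMulVec (W (p i.succ)) (W (p i.succ)) -
      Matrix.vecMulVec (W (p i.castSucc)) (W (p i.castSucc)))) ∈ partitionSums T W := by
    refine ⟨2 * N, p, hmono, ?_, ?_, rfl⟩
    · show q 0 = 0
      rw [show (0:ℕ) = 2 * 0 by rfl, hq_even]; simp
    · show q ((Fin.last (2*N) : Fin (2*N+1)) : ℕ) = T
      rw [Fin.val_last, hq_even N, hTN]
  have hb := hv _ hmem
  have hsum : (∑ i : Fin (2 * N), opNorm (Matrix.vecMulVec (W (p i.succ)) (W (p i.succ)) -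
      Matrix.vecMulVec (W (p i.castSucc)) (W (p i.castSucc)))) =
      ∑ i ∈ Finset.range (2 * N), opNorm (Matrix.vecMulVec (W (q (i+1))) (W (q (i+1))) -
      Matrix.vecMulVec (W (q i)) (W (q i))) := by
    exact Fin.sum_univ_eq_sum_range (fun i =>
      opNorm (Matrix.vecMulVec (W (q (i+1))) (W (q (i+1))) -
        Matrix.vecMulVec (W (q i)) (W (q i)))) (2 * N)
  rw [hsum, sum_range_two_mul] at hb
  calc ∑ k ∈ Finset.range N, opNorm (vecMulVec (W (τ k)) (W (τ k)) -
      vecMulVec (W ((k:ℝ) * δ)) (W ((k:ℝ) * δ)))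
      ≤ ∑ k ∈ Finset.range N,
        (opNorm (vecMulVec (W (τ k)) (W (τ k)) -
          vecMulVec (W ((k:ℝ) * δ)) (W ((k:ℝ) * δ))) +
         opNorm (Matrix.vecMulVec (W (q (2*k+1+1))) (W (q (2*k+1+1))) -
          Matrix.vecMulVec (W (τ k)) (W (τ k)))) :=
        Finset.sum_le_sum fun k _ => le_add_of_nonneg_right (opNorm_nonneg' _)
    _ = ∑ k ∈ Finset.range N,
        (opNorm (Matrix.vecMulVec (W (q (2*k+1))) (W (q (2*k+1))) -
          Matrix.vecMulVec (W (q (2*k))) (W (q (2*k)))) +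
         opNorm (Matrix.vecMulVec (W (q (2*k+1+1))) (W (q (2*k+1+1))) -
          Matrix.vecMulVec (W (q (2*k+1))) (W (q (2*k+1))))) := by
        refine Finset.sum_congr rfl fun k _ => ?_
        rw [hq_odd, hq_even]
    _ ≤ c := hb

/-- Sum of suprema of oscillations over sampling intervals is bounded by `c`. -/
lemma sup_sum_bound {T c δ : ℝ} {W : ℝ → ι → ℝ} (hv : TotalSqVarLE T W c)
    (hδ : 0 < δ) {N : ℕ} (hN : 0 < N) (hTN : T = N * δ) :
    ∑ k ∈ Finset.range N, sSup ((fun t => opNorm (vecMulVec (W t) (W t) -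
      vecMulVec (W ((k:ℝ) * δ)) (W ((k:ℝ) * δ)))) '' Set.Icc ((k:ℝ) * δ) (((k:ℝ) + 1) * δ)) ≤ c := by
  classical
  set S : ℕ → ℝ := fun k => sSup ((fun t => opNorm (vecMulVec (W t) (W t) -
      vecMulVec (W ((k:ℝ) * δ)) (W ((k:ℝ) * δ)))) '' Set.Icc ((k:ℝ) * δ) (((k:ℝ) + 1) * δ)) with hS
  refine le_of_forall_pos_le_add fun ε hε => ?_
  have hchoice : ∀ k : ℕ, ∃ t ∈ Set.Icc ((k:ℝ) * δ) (((k:ℝ) + 1) * δ),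
      S k - ε / N < opNorm (vecMulVec (W t) (W t) -
        vecMulVec (W ((k:ℝ) * δ)) (W ((k:ℝ) * δ))) := by
    intro k
    have hne : ((fun t => opNorm (vecMulVec (W t) (W t) -
        vecMulVec (W ((k:ℝ) * δ)) (W ((k:ℝ) * δ)))) ''
        Set.Icc ((k:ℝ) * δ) (((k:ℝ) + 1) * δ)).Nonempty := by
      have hmem0 : (k:ℝ) * δ ∈ Set.Icc ((k:ℝ)*δ) (((k:ℝ)+1)*δ) :=
        ⟨le_rfl, by nlinarith [hδ.le]⟩
      exact ⟨_, ⟨_, hmem0, rfl⟩⟩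
    have hlt : S k - ε / N < S k := by
      have : 0 < ε / N := by positivity
      linarith
    obtain ⟨z, hz, hzlt⟩ := exists_lt_of_lt_csSup hne hlt
    obtain ⟨t, ht, rfl⟩ := hz
    exact ⟨t, ht, hzlt⟩
  choose τ hτmem hτlt using hchoice
  have key := interleave_bound hv hδ hTN τ (fun k _ => hτmem k)
  calc ∑ k ∈ Finset.range N, S k
      ≤ ∑ k ∈ Finset.range N, (opNorm (vecMulVec (W (τ k)) (W (τ k)) -
          vecMulVec (W ((k:ℝ) * δ)) (W ((k:ℝ) * δ))) + ε / N) := by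
        refine Finset.sum_le_sum fun k _ => ?_
        have := hτlt k
        linarith
    _ = (∑ k ∈ Finset.range N, opNorm (vecMulVec (W (τ k)) (W (τ k)) -
          vecMulVec (W ((k:ℝ) * δ)) (W ((k:ℝ) * δ)))) + N * (ε / N) := by
        rw [Finset.sum_add_distrib, Finset.sum_const, Finset.card_range, nsmul_eq_mul]
    _ ≤ c + ε := by
        have hNε : (N:ℝ) * (ε / N) = ε := by
          field_simp
        rw [hNε]
        linarith [key]

lemma sum_mulVec'' {α : Type} (s : Finset α) (f : α → Matrix ι ι ℝ) (y : ι → ℝ) :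
    (∑ b ∈ s, f b).mulVec y = ∑ b ∈ s, (f b).mulVec y := by
  induction s using Finset.cons_induction with
  | empty => simp [Matrix.zero_mulVec]
  | cons a s h ih => rw [Finset.sum_cons, Finset.sum_cons, Matrix.add_mulVec, ih]

lemma dotProduct_sum'' {α : Type} (s : Finset α) (y : ι → ℝ) (v : α → ι → ℝ) :
    y ⬝ᵥ (∑ b ∈ s, v b) = ∑ b ∈ s, y ⬝ᵥ v b := by
  induction s using Finset.cons_induction with
  | empty => simp
  | cons a s h ih => rw [Finset.sum_cons, Finset.sum_cons, dotProduct_add, ih]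

lemma core_bound {n' : ℕ} {T c δ : ℝ} (hδ : 0 < δ) {N : ℕ} (hN : 0 < N) (hTN : T = N * δ)
    {W : ℝ → Fin n' → ℝ}
    (hW : ∀ i, AEStronglyMeasurable (fun t => W t i) (volume.restrict (Set.Ioc (0:ℝ) T)))
    (hv : TotalSqVarLE T W c) (y : Fin n' → ℝ) :
    |y ⬝ᵥ (matIntegral T (fun t => vecMulVec (W t) (W t))).mulVec y -
      y ⬝ᵥ (sampledGram δ N W).mulVec y| ≤ δ * c * ∑ i, y i ^ 2 := by
  classical
  have hT : 0 < T := by rw [hTN]; positivity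
  set μ := volume.restrict (Set.Ioc (0:ℝ) T) with hμ
  set Mf : ℝ → Matrix (Fin n') (Fin n') ℝ := fun t => vecMulVec (W t) (W t) with hMf
  set C : ℝ := opNorm (Mf 0) + c with hC
  have hMb : ∀ t ∈ Set.Icc (0:ℝ) T, opNorm (Mf t) ≤ C := fun t ht => sq_bound hv ht
  set Y : ℝ := ∑ i, y i ^ 2 with hY
  have hY0 : 0 ≤ Y := by positivity
  set q : ℝ → ℝ := fun t => y ⬝ᵥ (Mf t).mulVec y with hq
  have hq_eq : q = fun t => ∑ i, ∑ j, y i * (Mf t i j * y j) := by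
    funext t
    simp [hq, dotProduct, Matrix.mulVec, Finset.mul_sum]
  have hqb : ∀ t ∈ Set.Icc (0:ℝ) T, |q t| ≤ C * Y := by
    intro t ht
    calc |q t| ≤ opNorm (Mf t) * Y := quad_le _ _
    _ ≤ C * Y := mul_le_mul_of_nonneg_right (hMb t ht) hY0
  have hWij : ∀ i j, AEStronglyMeasurable (fun t => Mf t i j) μ := by
    intro i j
    have : (fun t => Mf t i j) = fun t => W t i * W t j := by
      funext t; simp [hMf, Matrix.vecMulVec_apply]
    rw [this]
    exact (hW i).mul (hW j)
  have hq_aesm : AEStronglyMeasurable q μ := by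
    rw [hq_eq]
    refine Finset.aestronglyMeasurable_fun_sum _ fun i _ => ?_
    refine Finset.aestronglyMeasurable_fun_sum _ fun j _ => ?_
    exact (((hWij i j).mul_const (y j)).const_mul (y i))
  have hint_ij : ∀ i j, IntegrableOn (fun t => Mf t i j) (Set.Ioc (0:ℝ) T) := by
    intro i j
    refine Integrable.mono' (integrable_const C) (hWij i j) ?_
    rw [ae_restrict_iff' measurableSet_Ioc]
    refine Filter.Eventually.of_forall fun t ht => ?_
    rw [Real.norm_eq_abs]
    exact (abs_entry_le _ i j).trans (hMb t ⟨ht.1.le, ht.2⟩)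
  have hq_int : IntegrableOn q (Set.Ioc (0:ℝ) T) := by
    refine Integrable.mono' (integrable_const (C * Y)) hq_aesm ?_
    rw [ae_restrict_iff' measurableSet_Ioc]
    exact Filter.Eventually.of_forall fun t ht => by
      rw [Real.norm_eq_abs]; exact hqb t ⟨ht.1.le, ht.2⟩
  -- the integral side
  have hIq : y ⬝ᵥ (matIntegral T Mf).mulVec y = ∫ t in Set.Ioc (0:ℝ) T, q t := by
    have h1 : y ⬝ᵥ (matIntegral T Mf).mulVec y =
        ∑ i, ∑ j, y i * ((∫ t in Set.Ioc (0:ℝ) T, Mf t i j) * y j) := by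
      simp [matIntegral, dotProduct, Matrix.mulVec, Finset.mul_sum]
    rw [h1, hq_eq]
    rw [MeasureTheory.integral_finset_sum]
    · refine Finset.sum_congr rfl fun i _ => ?_
      rw [MeasureTheory.integral_finset_sum]
      · refine Finset.sum_congr rfl fun j _ => ?_
        rw [MeasureTheory.integral_const_mul, MeasureTheory.integral_mul_const]
      · exact fun j _ => ((hint_ij i j).mul_const (y j)).const_mul (y i)
    · exact fun i _ => MeasureTheory.integrable_finset_sum _
        fun j _ => ((hint_ij i j).mul_const (y j)).const_mul (y i)
  -- splitting the domain
  set a : ℕ → ℝ := fun k => (k:ℝ) * δ with haa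
  have ha_succ : ∀ k : ℕ, a (k+1) = (k:ℝ) * δ + δ := by
    intro k; simp only [haa]; push_cast; ring
  have ha_le : ∀ k : ℕ, a k ≤ a (k+1) := by
    intro k; rw [ha_succ]; simp only [haa]; linarith [hδ.le]
  have ha0 : a 0 = 0 := by simp [haa]
  have haN : a N = T := by rw [hTN]
  have hsub : ∀ k, k < N → Set.Ioc (a k) (a (k+1)) ⊆ Set.Ioc 0 T := by
    intro k hk
    apply Set.Ioc_subset_Ioc
    · simp only [haa]; positivity
    · rw [ha_succ, hTN]
      have : (k:ℝ) + 1 ≤ (N:ℝ) := by exact_mod_cast hk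
      nlinarith [hδ.le]
  have hIccsub : ∀ k, k < N → Set.Icc (a k) (a (k+1)) ⊆ Set.Icc 0 T := by
    intro k hk
    apply Set.Icc_subset_Icc
    · simp only [haa]; positivity
    · rw [ha_succ, hTN]
      have : (k:ℝ) + 1 ≤ (N:ℝ) := by exact_mod_cast hk
      nlinarith [hδ.le]
  have hIk_int : ∀ k, k < N → IntegrableOn q (Set.Ioc (a k) (a (k+1))) :=
    fun k hk => hq_int.mono_set (hsub k hk)
  have hsplit : ∫ t in Set.Ioc (0:ℝ) T, q t
      = ∑ k ∈ Finset.range N, ∫ t in Set.Ioc (a k) (a (k+1)), q t := by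
    have hii : ∀ k < N, IntervalIntegrable q volume (a k) (a (k+1)) :=
      fun k hk => (intervalIntegrable_iff_integrableOn_Ioc_of_le (ha_le k)).2 (hIk_int k hk)
    have h := intervalIntegral.sum_integral_adjacent_intervals hii
    rw [ha0, haN] at h
    rw [← intervalIntegral.integral_of_le hT.le, ← h]
    exact Finset.sum_congr rfl fun k _ => (intervalIntegral.integral_of_le (ha_le k))
  have hGq : y ⬝ᵥ (sampledGram δ N W).mulVec y = ∑ k ∈ Finset.range N, δ * q (a k) := by
    simp only [sampledGram, Matrix.smul_mulVec, dotProduct_smul, smul_eq_mul]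
    rw [sum_mulVec'', dotProduct_sum'', Finset.mul_sum]
  -- suprema of oscillations
  set S : ℕ → ℝ := fun k => sSup ((fun t => opNorm (vecMulVec (W t) (W t) -
      vecMulVec (W ((k:ℝ) * δ)) (W ((k:ℝ) * δ)))) '' Set.Icc ((k:ℝ) * δ) (((k:ℝ) + 1) * δ)) with hSdef
  have hSsum : ∑ k ∈ Finset.range N, S k ≤ c := sup_sum_bound hv hδ hN hTN
  have hIcc_eq : ∀ k : ℕ, Set.Icc (a k) (a (k+1)) = Set.Icc ((k:ℝ) * δ) (((k:ℝ) + 1) * δ) := by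
    intro k; rw [ha_succ]; congr 1; ring
  have hbdd : ∀ k, k < N → BddAbove ((fun t => opNorm (vecMulVec (W t) (W t) -
      vecMulVec (W ((k:ℝ) * δ)) (W ((k:ℝ) * δ)))) '' Set.Icc ((k:ℝ) * δ) (((k:ℝ) + 1) * δ)) := by
    intro k hk
    refine ⟨C + C, fun z hz => ?_⟩
    obtain ⟨t, ht, rfl⟩ := hz
    have ht' : t ∈ Set.Icc (0:ℝ) T := hIccsub k hk (by rw [hIcc_eq]; exact ht)
    have hak : (k:ℝ) * δ ∈ Set.Icc (0:ℝ) T := by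
      refine hIccsub k hk ?_
      rw [hIcc_eq]
      exact ⟨le_rfl, by nlinarith [hδ.le]⟩
    calc opNorm (vecMulVec (W t) (W t) - vecMulVec (W ((k:ℝ)*δ)) (W ((k:ℝ)*δ)))
        ≤ opNorm (vecMulVec (W t) (W t)) + opNorm (vecMulVec (W ((k:ℝ)*δ)) (W ((k:ℝ)*δ))) :=
          opNorm_sub_le₂ _ _
      _ ≤ C + C := add_le_add (hMb t ht') (hMb _ hak)
  have hSk_le : ∀ k, k < N → ∀ t ∈ Set.Icc (a k) (a (k+1)),
      opNorm (Mf t - Mf (a k)) ≤ S k := by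
    intro k hk t ht
    rw [hIcc_eq] at ht
    exact le_csSup (hbdd k hk) (Set.mem_image_of_mem _ ht)
  -- per-interval bound
  have hIb : ∀ k, k < N → |(∫ t in Set.Ioc (a k) (a (k+1)), q t) - δ * q (a k)| ≤ δ * (S k * Y) := by
    intro k hk
    have hconst : δ * q (a k) = ∫ _t in Set.Ioc (a k) (a (k+1)), q (a k) := by
      rw [MeasureTheory.setIntegral_const, measureReal_def, Real.volume_Ioc, ha_succ,
        show (k:ℝ)*δ + δ - a k = δ by simp only [haa]; ring,
        ENNReal.toReal_ofReal hδ.le, smul_eq_mul]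
    rw [hconst, ← MeasureTheory.integral_sub (hIk_int k hk) (integrable_const _)]
    have hvol : volume (Set.Ioc (a k) (a (k+1))) < ⊤ := by
      rw [Real.volume_Ioc]; exact ENNReal.ofReal_lt_top
    have haesm : AEStronglyMeasurable (fun t => q t - q (a k))
        (volume.restrict (Set.Ioc (a k) (a (k+1)))) := by
      refine AEStronglyMeasurable.sub ?_ aestronglyMeasurable_const
      exact hq_aesm.mono_measure (Measure.restrict_mono (hsub k hk) le_rfl)
    have hbound : ∀ t ∈ Set.Ioc (a k) (a (k+1)), ‖q t - q (a k)‖ ≤ S k * Y := by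
      intro t ht
      have heq : q t - q (a k) = y ⬝ᵥ (Mf t - Mf (a k)).mulVec y := by
        simp [hq, Matrix.sub_mulVec, dotProduct_sub]
      rw [Real.norm_eq_abs, heq]
      calc |y ⬝ᵥ (Mf t - Mf (a k)).mulVec y| ≤ opNorm (Mf t - Mf (a k)) * Y := quad_le _ _
      _ ≤ S k * Y :=
        mul_le_mul_of_nonneg_right (hSk_le k hk t ⟨ht.1.le, ht.2⟩) hY0
    have hfin := MeasureTheory.norm_setIntegral_le_of_norm_le_const hvol hbound
    rw [Real.norm_eq_abs] at hfin
    calc |∫ t in Set.Ioc (a k) (a (k+1)), (q t - q (a k))| ≤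
        (S k * Y) * (volume (Set.Ioc (a k) (a (k+1)))).toReal := hfin
    _ = δ * (S k * Y) := by
        rw [Real.volume_Ioc, ha_succ, show (k:ℝ)*δ + δ - a k = δ by simp only [haa]; ring,
          ENNReal.toReal_ofReal hδ.le]
        ring
  -- assemble
  rw [hIq, hGq, hsplit, ← Finset.sum_sub_distrib]
  calc |∑ k ∈ Finset.range N, ((∫ t in Set.Ioc (a k) (a (k+1)), q t) - δ * q (a k))|
      ≤ ∑ k ∈ Finset.range N, |(∫ t in Set.Ioc (a k) (a (k+1)), q t) - δ * q (a k)| :=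
        Finset.abs_sum_le_sum_abs _ _
    _ ≤ ∑ k ∈ Finset.range N, δ * (S k * Y) :=
        Finset.sum_le_sum fun k hk => hIb k (Finset.mem_range.1 hk)
    _ = δ * Y * ∑ k ∈ Finset.range N, S k := by
        rw [Finset.mul_sum]
        exact Finset.sum_congr rfl fun k _ => by ring
    _ ≤ δ * Y * c := by
        refine mul_le_mul_of_nonneg_left hSsum (by positivity)
    _ = δ * c * Y := by ring

lemma vecMulVec_integral_herm {n' : ℕ} (T : ℝ) (W : ℝ → Fin n' → ℝ) :
    (matIntegral T (fun t => vecMulVec (W t) (W t))).IsHermitian := by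
  show _ = _
  ext i j
  simp only [Matrix.conjTranspose_apply, star_trivial, matIntegral, Matrix.of_apply,
    Matrix.vecMulVec_apply]
  exact integral_congr_ae (Filter.Eventually.of_forall fun t => mul_comm _ _)

lemma sampledGram_herm {n' : ℕ} (δ : ℝ) (N : ℕ) (W : ℝ → Fin n' → ℝ) :
    (sampledGram δ N W).IsHermitian := by
  show _ = _
  ext i j
  simp only [sampledGram, Matrix.conjTranspose_apply, star_trivial, Matrix.smul_apply,
    Matrix.sum_apply, Matrix.vecMulVec_apply, smul_eq_mul]
  congr 1
  exact Finset.sum_congr rfl fun k _ => mul_comm _ _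

lemma herm_smul_one (c : ℝ) : (c • (1 : Matrix ι ι ℝ)).IsHermitian := by
  show _ = _
  ext i j
  simp only [Matrix.conjTranspose_apply, star_trivial, Matrix.smul_apply, Matrix.one_apply,
    smul_eq_mul]
  by_cases h : i = j <;> simp [h, eq_comm]

lemma noise_aesm {n m : ℕ} {T : ℝ}
    {x xdot : ℝ → Fin n → ℝ} {u : ℝ → Fin m → ℝ}
    (hxdotL2 : MeasureTheory.MemLp xdot 2 (MeasureTheory.volume.restrict (Set.Icc (0:ℝ) T)))
    (huL2 : MeasureTheory.MemLp u 2 (MeasureTheory.volume.restrict (Set.Icc (0:ℝ) T)))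
    (hAC : ∀ t ∈ Set.Icc (0:ℝ) T, ∀ i, x t i = x 0 i + ∫ s in (0:ℝ)..t, xdot s i)
    (A : Matrix (Fin n) (Fin n) ℝ) (B : Matrix (Fin n) (Fin m) ℝ) :
    ∀ i, AEStronglyMeasurable (fun t => noiseSig xdot x u A B t i)
      (volume.restrict (Set.Ioc (0:ℝ) T)) := by
  have hmono : volume.restrict (Set.Ioc (0:ℝ) T) ≤ volume.restrict (Set.Icc (0:ℝ) T) :=
    Measure.restrict_mono Set.Ioc_subset_Icc_self le_rfl
  have hxdot_i : ∀ i, AEStronglyMeasurable (fun t => xdot t i)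
      (volume.restrict (Set.Ioc (0:ℝ) T)) := fun i =>
    ((continuous_apply i).comp_aestronglyMeasurable hxdotL2.aestronglyMeasurable).mono_measure hmono
  have hu_j : ∀ j, AEStronglyMeasurable (fun t => u t j)
      (volume.restrict (Set.Ioc (0:ℝ) T)) := fun j =>
    ((continuous_apply j).comp_aestronglyMeasurable huL2.aestronglyMeasurable).mono_measure hmono
  have hxdot_int : Integrable xdot (volume.restrict (Set.Icc (0:ℝ) T)) :=
    hxdotL2.integrable (by norm_num)
  have hx_j : ∀ j, AEStronglyMeasurable (fun t => x t j)
      (volume.restrict (Set.Ioc (0:ℝ) T)) := by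
    intro j
    have hint : IntegrableOn (fun s => xdot s j) (Set.Icc (0:ℝ) T) volume :=
      (ContinuousLinearMap.proj (R := ℝ) (φ := fun _ : Fin n => ℝ) j).integrable_comp hxdot_int
    have hcont : ContinuousOn (fun t => x 0 j + ∫ s in Set.Ioc (0:ℝ) t, xdot s j)
        (Set.Icc (0:ℝ) T) :=
      continuousOn_const.add (intervalIntegral.continuousOn_primitive hint)
    have hg : AEStronglyMeasurable (fun t => x 0 j + ∫ s in Set.Ioc (0:ℝ) t, xdot s j)
        (volume.restrict (Set.Icc (0:ℝ) T)) :=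
      hcont.aestronglyMeasurable measurableSet_Icc
    refine (hg.mono_measure hmono).congr ?_
    rw [Filter.EventuallyEq, ae_restrict_iff' measurableSet_Ioc]
    refine Filter.Eventually.of_forall fun t ht => ?_
    rw [hAC t ⟨ht.1.le, ht.2⟩ j, intervalIntegral.integral_of_le ht.1.le]
  intro i
  have heq : (fun t => noiseSig xdot x u A B t i) =
      fun t => xdot t i - (∑ j, A i j * x t j) - (∑ j, B i j * u t j) := by
    funext t
    simp [noiseSig, Matrix.mulVec, dotProduct]
  rw [heq]
  exact ((hxdot_i i).sub
    (Finset.aestronglyMeasurable_fun_sum _ fun j _ => (hx_j j).const_mul _)).sub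
    (Finset.aestronglyMeasurable_fun_sum _ fun j _ => (hu_j j).const_mul _)

end Helpers

theorem stmt10
    {n m : ℕ} (T : ℝ) (hT : 0 < T)
    (x xdot : ℝ → Fin n → ℝ) (u : ℝ → Fin m → ℝ)
    (Q : Matrix (Fin n) (Fin n) ℝ) (hQ : Q.PosSemidef)
    (hxdotL2 : MeasureTheory.MemLp xdot 2 (MeasureTheory.volume.restrict (Set.Icc (0:ℝ) T)))
    (huL2 : MeasureTheory.MemLp u 2 (MeasureTheory.volume.restrict (Set.Icc (0:ℝ) T)))
    (hAC : ∀ t ∈ Set.Icc (0:ℝ) T, ∀ i, x t i = x 0 i + ∫ s in (0:ℝ)..t, xdot s i)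
    (As : Matrix (Fin n) (Fin n) ℝ) (Bs : Matrix (Fin n) (Fin m) ℝ)
    (htrue : (As, Bs) ∈ SigmaCont T xdot x u Q)
    (δ : ℝ) (hδ : 0 < δ) (N : ℕ) (hN : 0 < N) (hTN : T = N * δ)
    :
    ∀ L : ℝ, 0 ≤ L →
      (SigmaDisc δ N xdot x u Q ∩ Nset T L xdot x u ⊆
        SigmaCont T xdot x u (Q + (δ * T * L / 2) • (1 : Matrix (Fin n) (Fin n) ℝ))) ∧
      (SigmaCont T xdot x u Q ∩ Nset T L xdot x u ⊆
        SigmaDisc δ N xdot x u (Q + (δ * T * L / 2) • (1 : Matrix (Fin n) (Fin n) ℝ))) ∧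
      (TotalSqVarLE T (noiseSig xdot x u As Bs) (L * T / 2) →
        (As, Bs) ∈ SigmaCont T xdot x u Q ∩ Nset T L xdot x u) := by
  
  intro L hL
  have hQh : Q.IsHermitian := hQ.1
  have hdot : ∀ y : Fin n → ℝ, y ⬝ᵥ y = ∑ i, y i ^ 2 := by
    intro y; simp [dotProduct, sq]
  refine ⟨?_, ?_, fun h => ⟨htrue, h⟩⟩
  · rintro ⟨A, B⟩ ⟨h1, h2⟩
    have hWm := noise_aesm hxdotL2 huL2 hAC A B
    have hvar : TotalSqVarLE T (noiseSig xdot x u A B) (L * T / 2) := h2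
    have hcore := core_bound hδ hN hTN hWm hvar
    have hGherm := sampledGram_herm δ N (noiseSig xdot x u A B)
    have hIherm := vecMulVec_integral_herm T (noiseSig xdot x u A B)
    have h1' : (Q - sampledGram δ N (noiseSig xdot x u A B)).PosSemidef := h1
    refine Matrix.PosSemidef.of_dotProduct_mulVec_nonneg ((hQh.add (herm_smul_one _)).sub hIherm) fun y => ?_
    have hq1 := h1'.dotProduct_mulVec_nonneg y
    have hc := hcore y
    rw [abs_le] at hc
    simp only [star_trivial, Matrix.sub_mulVec, Matrix.add_mulVec, dotProduct_sub,
      dotProduct_add, Matrix.smul_mulVec, Matrix.one_mulVec,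
      dotProduct_smul, smul_eq_mul] at hq1 ⊢
    rw [hdot y]
    have hTLδ : δ * T * L / 2 = δ * (L * T / 2) := by ring
    rw [hTLδ]
    linarith [hc.1, hc.2]
  · rintro ⟨A, B⟩ ⟨h1, h2⟩
    have hWm := noise_aesm hxdotL2 huL2 hAC A B
    have hvar : TotalSqVarLE T (noiseSig xdot x u A B) (L * T / 2) := h2
    have hcore := core_bound hδ hN hTN hWm hvar
    have hGherm := sampledGram_herm δ N (noiseSig xdot x u A B)
    have hIherm := vecMulVec_integral_herm T (noiseSig xdot x u A B)
    have h1' : (Q - matIntegral T (fun t => vecMulVec (noiseSig xdot x u A B t)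
        (noiseSig xdot x u A B t))).PosSemidef := h1
    refine Matrix.PosSemidef.of_dotProduct_mulVec_nonneg ((hQh.add (herm_smul_one _)).sub hGherm) fun y => ?_
    have hq1 := h1'.dotProduct_mulVec_nonneg y
    have hc := hcore y
    rw [abs_le] at hc
    simp only [star_trivial, Matrix.sub_mulVec, Matrix.add_mulVec, dotProduct_sub,
      dotProduct_add, Matrix.smul_mulVec, Matrix.one_mulVec,
      dotProduct_smul, smul_eq_mul] at hq1 ⊢
    rw [hdot y]
    have hTLδ : δ * T * L / 2 = δ * (L * T / 2) := by ring
    rw [hTLδ]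
    linarith [hc.1, hc.2]
end
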